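/- Let a ∈ (0,1) and 0 < ā₀ < a/8. Suppose p_n : (0,t̄) → (−1,1) satisfies |p_I − p_n(t)| < ā₀ for all t < t̄ and p_n(t) − a ≥ −1, p_n(t) + a ≤ 1, and let λ_n : (0,t̄) → ℝ be integrable. Then there exists a constant G(a), depending only on a, such that the Duhamel source term I₂ satisfies |∂_x I₂(x,t)| ≤ G(a) ∫_0^t |λ_n(s)| ds for all t < t̄ and all x with |x − p_I| < ā₀. -/

import Mathlib

open MeasureTheory

/-- The 1D heat kernel `K(x,t) = (4πt)^{-1/2} exp(-x²/(4t))`. -/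
noncomputable def heatK (x t : ℝ) : ℝ :=
  (Real.sqrt (4 * Real.pi * t))⁻¹ * Real.exp (-(x ^ 2) / (4 * t))

/-- The Neumann heat kernel on `[-1,1]`:
`Γ(x,x';t) = Σ_{k∈ℤ} K(x − (2k + (−1)^{|k|} x'), t)`. -/
noncomputable def heatGamma (x x' t : ℝ) : ℝ :=
  ∑' k : ℤ, heatK (x - (2 * (k : ℝ) + (-1 : ℝ) ^ k.natAbs * x')) t

/-- The flux `λ(s) = −∂ₓ f(p(s), s)` at the free boundary. -/
noncomputable def flux (f : ℝ → ℝ → ℝ) (p : ℝ → ℝ) (s : ℝ) : ℝ :=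
  -deriv (fun x => f x s) (p s)

/-- `ā(s) = min {a, 1 − p(s), 1 + p(s)}`. -/
noncomputable def abar (a : ℝ) (p : ℝ → ℝ) (s : ℝ) : ℝ :=
  min a (min (1 - p s) (1 + p s))

/-- The sup norm `‖h‖_{L^∞(−1,1)}` (for continuous `h`). -/
noncomputable def supNorm (h : ℝ → ℝ) : ℝ := ⨆ x : Set.Icc (-1:ℝ) 1, |h x.1|

/-- Conditions (i)–(iii) on the initial datum `f_I ∈ C²([−1,1])`:
(i) unique zero `p_I ∈ (−1,1)`, positive to the left, negative to the right;
(ii) Neumann conditions `∂ₓf_I(±1) = 0`;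
(iii) `λ_I = −∂ₓ f_I(p_I) > 0` and `−∂ₓ f_I > λ_I/2` on `(p_I − a₀, p_I + a₀)`. -/
structure IsInitialDatum (fI : ℝ → ℝ) (pI a₀ lamI : ℝ) : Prop where
  smooth : ContDiffOn ℝ 2 fI (Set.Icc (-1) 1)
  pI_mem : pI ∈ Set.Ioo (-1 : ℝ) 1
  zero_at : fI pI = 0
  pos_left : ∀ x ∈ Set.Ico (-1 : ℝ) pI, 0 < fI x
  neg_right : ∀ x ∈ Set.Ioc pI 1, fI x < 0
  neumann_left : derivWithin fI (Set.Icc (-1) 1) (-1) = 0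
  neumann_right : derivWithin fI (Set.Icc (-1) 1) 1 = 0
  lamI_eq : lamI = -deriv fI pI
  lamI_pos : 0 < lamI
  slope : ∀ x ∈ Set.Ioo (pI - a₀) (pI + a₀), lamI / 2 < -deriv fI x

/-- A solution `(f, p)` of problem (P) on the time set `J` with parameter `a` and
initial datum `f_I`: `p` is a continuous curve in `(−1,1)`, `p(t)` is the unique zero
of `f(·,t)` (positive to the left, negative to the right), `f(·,t)` is differentiable
at `p(t)`, the flux is locally integrable on `J`, and the Duhamel identity holds. -/
structure IsSolutionP (a : ℝ) (fI : ℝ → ℝ) (J : Set ℝ) (f : ℝ → ℝ → ℝ) (p : ℝ → ℝ) : Prop where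
  p_cont : ContinuousOn p J
  p_mem : ∀ t ∈ J, p t ∈ Set.Ioo (-1 : ℝ) 1
  zero_at : ∀ t ∈ J, f (p t) t = 0
  pos_left : ∀ t ∈ J, ∀ x ∈ Set.Ico (-1 : ℝ) (p t), 0 < f x t
  neg_right : ∀ t ∈ J, ∀ x ∈ Set.Ioc (p t) 1, f x t < 0
  diff_at : ∀ t ∈ J, DifferentiableAt ℝ (fun x => f x t) (p t)
  flux_loc_int : LocallyIntegrableOn (flux f p) J
  duhamel : ∀ t ∈ J, ∀ x ∈ Set.Icc (-1 : ℝ) 1,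
      f x t = (∫ x' in (-1 : ℝ)..1, heatGamma x x' t * fI x')
        + ∫ s in (0 : ℝ)..t,
            (heatGamma x (p s - abar a p s) (t - s)
              - heatGamma x (p s + abar a p s) (t - s)) * flux f p s

/-- The Duhamel iterate with data `(p_n, λ_n)` and initial datum `f_I`. -/
noncomputable def duhamelIterate (a : ℝ) (fI pn lamn : ℝ → ℝ) (x t : ℝ) : ℝ :=
  (∫ x' in (-1 : ℝ)..1, heatGamma x x' t * fI x')
    + ∫ s in (0 : ℝ)..t,
        (heatGamma x (pn s - a) (t - s) - heatGamma x (pn s + a) (t - s)) * lamn s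

noncomputable def mfun (k : ℤ) : ℝ := max 1 |(k : ℝ)|

lemma mfun_pos (k : ℤ) : 0 < mfun k := lt_of_lt_of_le one_pos (le_max_left _ _)

lemma summable_inv_mfun_sq : Summable (fun k : ℤ => 1 / (mfun k)^2) := by
  have h1 : Summable (fun k : ℤ => 1 / (k:ℝ)^2) :=
    Real.summable_one_div_int_pow.mpr one_lt_two
  have h2 : Summable (fun k : ℤ => if k = 0 then (1:ℝ) else 0) := by
    apply summable_of_ne_finset_zero (s := {0})
    intro k hk
    simp only [Finset.mem_singleton] at hk
    simp [hk]
  refine (h1.add h2).congr ?_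
  intro k
  by_cases hk : k = 0
  · subst hk; simp [mfun]
  · have hk1 : (1:ℝ) ≤ |(k:ℝ)| := by
      rw [← Int.cast_abs]
      exact_mod_cast Int.one_le_abs (by exact_mod_cast hk)
    simp only [mfun, hk, if_false, max_eq_right hk1, add_zero, sq_abs]

noncomputable def Sint : ℝ := ∑' k : ℤ, 1 / (mfun k)^2

lemma Sint_nonneg : 0 ≤ Sint := tsum_nonneg fun k => by positivity

lemma heatK_nonneg (u t : ℝ) : 0 ≤ heatK u t :=
  mul_nonneg (inv_nonneg.2 (Real.sqrt_nonneg _)) (Real.exp_pos _).le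

lemma heatK_zero (u : ℝ) : heatK u 0 = 0 := by
  simp [heatK]

lemma heatGamma_zero (z x' : ℝ) : heatGamma z x' 0 = 0 := by
  simp [heatGamma, heatK_zero]
lemma heatK_hasDerivAt {τ : ℝ} (hτ : 0 < τ) (y z : ℝ) :
    HasDerivAt (fun z => heatK (z - y) τ) (-(z - y)/(2*τ) * heatK (z - y) τ) z := by
  have h1 : HasDerivAt (fun z : ℝ => z - y) 1 z := (hasDerivAt_id z).sub_const y
  have h2 : HasDerivAt (fun z : ℝ => (z - y)^2) (2*(z-y)) z := by
    have := h1.pow 2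
    simp at this; exact this
  have h3 : HasDerivAt (fun z : ℝ => -((z - y)^2) / (4*τ)) (-(2*(z-y))/(4*τ)) z := by
    simpa [neg_div] using (h2.neg.div_const (4*τ))
  have h4 := (h3.exp).const_mul ((Real.sqrt (4*Real.pi*τ))⁻¹)
  refine h4.congr_deriv ?_
  unfold heatK
  have hτ' : τ ≠ 0 := hτ.ne'
  field_simp
  ring

lemma heatK_deriv_bound {τ u : ℝ} (hτ : 0 < τ) (hu : u ≠ 0) :
    |(-(u)/(2*τ)) * heatK u τ| ≤ 8 / u^2 := by
  have hc : 0 < Real.sqrt τ := Real.sqrt_pos.mpr hτ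
  set c := Real.sqrt τ with hcdef
  have hc2 : c^2 = τ := Real.sq_sqrt hτ.le
  have hu0 : 0 < |u| := abs_pos.mpr hu
  set q := |u| / (2*c) with hqdef
  have hq0 : 0 < q := by positivity
  have huq : |u| = 2*c*q := by rw [hqdef]; field_simp
  have hu2 : u^2 = 4*c^2*q^2 := by
    have : u^2 = |u|^2 := (sq_abs u).symm
    rw [this, huq]; ring
  have hsqrt : 2*c ≤ Real.sqrt (4*Real.pi*τ) := by
    have h1 : (2*c) = Real.sqrt (4*τ) := by
      rw [show (4:ℝ)*τ = (2*c)^2 by rw [mul_pow, hc2]; ring]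
      exact (Real.sqrt_sq (by positivity)).symm
    rw [h1]
    apply Real.sqrt_le_sqrt
    nlinarith [Real.pi_gt_three]
  have hE : Real.exp (-(u^2)/(4*τ)) = Real.exp (-(q^2)) := by
    congr 1
    rw [hu2, ← hc2]
    field_simp
  have key : q^3 * Real.exp (-(q^2)) ≤ 4 := by
    have h := Real.add_one_le_exp (q^2/2)
    have hE2 : (Real.exp (q^2/2))^2 = Real.exp (q^2) := by
      rw [pow_two, ← Real.exp_add]
      norm_num
    have h2 : q^3 ≤ 4 * Real.exp (q^2) := by
      rw [← hE2]
      nlinarith [sq_nonneg (q^2 - q), hq0.le, Real.exp_pos (q^2/2)]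
    rw [Real.exp_neg]
    rw [mul_inv_le_iff₀ (Real.exp_pos _)]
    linarith
  have hsqpos : 0 < Real.sqrt (4*Real.pi*τ) := lt_of_lt_of_le (by positivity) hsqrt
  have hKle : heatK u τ ≤ (2*c)⁻¹ * Real.exp (-(q^2)) := by
    unfold heatK
    rw [hE]
    apply mul_le_mul_of_nonneg_right _ (Real.exp_pos _).le
    exact inv_anti₀ (by positivity) hsqrt
  have habs : |(-(u)/(2*τ)) * heatK u τ| = |u|/(2*τ) * heatK u τ := by
    have hK0 : 0 ≤ heatK u τ :=
      mul_nonneg (inv_nonneg.2 (Real.sqrt_nonneg _)) (Real.exp_pos _).le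
    rw [abs_mul, abs_div, abs_neg, abs_of_pos (by positivity : (0:ℝ) < 2*τ), abs_of_nonneg hK0]
  rw [habs]
  calc |u|/(2*τ) * heatK u τ ≤ |u|/(2*τ) * ((2*c)⁻¹ * Real.exp (-(q^2))) := by
        apply mul_le_mul_of_nonneg_left hKle (by positivity)
    _ ≤ 8 / u^2 := by
        rw [huq, hu2, ← hc2]
        have hform : 2*c*q/(2*c^2) * ((2*c)⁻¹ * Real.exp (-(q^2)))
            = q * Real.exp (-(q^2)) / (2*c^2) := by
          field_simp
        rw [hform, div_le_div_iff₀ (by positivity) (by positivity)]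
        have hEpos := Real.exp_pos (-(q^2))
        nlinarith [key, sq_nonneg c, sq_nonneg q, mul_pos hc hc]

lemma heatK_le {τ u : ℝ} (hτ : 0 < τ) (hu : u ≠ 0) :
    heatK u τ ≤ (Real.sqrt (4*Real.pi*τ))⁻¹ * (4*τ) / u^2 := by
  unfold heatK
  have hv : 0 < u^2/(4*τ) := by positivity
  have h1 : Real.exp (-(u^2)/(4*τ)) ≤ 4*τ/u^2 := by
    rw [show -(u^2)/(4*τ) = -(u^2/(4*τ)) by ring, Real.exp_neg]
    rw [inv_le_comm₀ (Real.exp_pos _) (by positivity)]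
    calc (4*τ/u^2)⁻¹ = u^2/(4*τ) := by rw [inv_div]
      _ ≤ Real.exp (u^2/(4*τ)) := by
          nlinarith [Real.add_one_le_exp (u^2/(4*τ))]
  calc (Real.sqrt (4*Real.pi*τ))⁻¹ * Real.exp (-(u^2)/(4*τ))
      ≤ (Real.sqrt (4*Real.pi*τ))⁻¹ * (4*τ/u^2) :=
        mul_le_mul_of_nonneg_left h1 (inv_nonneg.2 (Real.sqrt_nonneg _))
    _ = (Real.sqrt (4*Real.pi*τ))⁻¹ * (4*τ) / u^2 := by ring

lemma heatK_lip {τ y d z₁ z₂ : ℝ} (hτ : 0 < τ) (hd : 0 < d)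
    (H : ∀ z ∈ Set.uIcc z₁ z₂, d ≤ |z - y|) :
    |heatK (z₁ - y) τ - heatK (z₂ - y) τ| ≤ 8/d^2 * |z₁ - z₂| := by
  have hbd : ∀ z ∈ Set.uIcc z₁ z₂,
      ‖-(z - y)/(2*τ) * heatK (z - y) τ‖ ≤ 8/d^2 := by
    intro z hz
    have hzy : z - y ≠ 0 := by
      intro h
      have := H z hz
      rw [h, abs_zero] at this
      linarith
    rw [Real.norm_eq_abs]
    calc |(-(z - y))/(2*τ) * heatK (z - y) τ| ≤ 8/(z-y)^2 := heatK_deriv_bound hτ hzy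
      _ ≤ 8/d^2 := by
          apply div_le_div_of_nonneg_left (by norm_num) (by positivity)
          calc d^2 ≤ |z-y|^2 := by
                have := H z hz
                nlinarith [abs_nonneg (z-y)]
            _ = (z-y)^2 := sq_abs _
  have := Convex.norm_image_sub_le_of_norm_hasDerivWithin_le
    (f := fun z => heatK (z - y) τ) (f' := fun z => -(z - y)/(2*τ) * heatK (z - y) τ)
    (fun z hz => (heatK_hasDerivAt hτ y z).hasDerivWithinAt)
    hbd (convex_uIcc z₁ z₂) Set.right_mem_uIcc Set.left_mem_uIcc
  simpa [Real.norm_eq_abs] using this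

lemma geom_bound {a x' z : ℝ} (ha0 : 0 < a) (ha1 : a < 1)
    (hx'l : -1 ≤ x') (hx'r : x' ≤ 1)
    (hzl : -1 + 3*a/4 ≤ z) (hzr : z ≤ 1 - 3*a/4)
    (hzx : 3*a/4 ≤ |z - x'|) (k : ℤ) :
    3*a/4 * mfun k ≤ |z - (2*(k:ℝ) + (-1:ℝ)^k.natAbs * x')| := by
  rcases eq_or_ne k 0 with rfl | hk0
  · simpa [mfun] using hzx
  rcases eq_or_ne k 1 with rfl | hk1
  · have hm : mfun 1 = 1 := by norm_num [mfun]
    rw [hm, mul_one]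
    have h := neg_le_abs (z - (2*((1:ℤ):ℝ) + (-1:ℝ)^(1:ℤ).natAbs * x'))
    have he : (2*((1:ℤ):ℝ) + (-1:ℝ)^(1:ℤ).natAbs * x') = 2 - x' := by norm_num; ring
    rw [he] at h
    rw [he]
    linarith
  rcases eq_or_ne k (-1) with rfl | hkm1
  · have hm : mfun (-1) = 1 := by norm_num [mfun]
    rw [hm, mul_one]
    have h := le_abs_self (z - (2*((-1:ℤ):ℝ) + (-1:ℝ)^(-1:ℤ).natAbs * x'))
    have he : (2*((-1:ℤ):ℝ) + (-1:ℝ)^(-1:ℤ).natAbs * x') = -2 - x' := by norm_num; ring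
    rw [he] at h
    rw [he]
    linarith
  · have hk2 : (2:ℤ) ≤ |k| := by
      rcases lt_or_ge k 0 with h | h
      · rw [abs_of_neg h]; omega
      · rw [abs_of_nonneg h]; omega
    have hkr : (2:ℝ) ≤ |(k:ℝ)| := by
      rw [← Int.cast_abs]
      exact_mod_cast hk2
    have hm : mfun k = |(k:ℝ)| := max_eq_right (by linarith)
    have he : |(-1:ℝ)^k.natAbs * x'| ≤ 1 := by
      rw [abs_mul, abs_pow, abs_neg, abs_one, one_pow, one_mul]
      exact abs_le.mpr ⟨hx'l, hx'r⟩
    have hz1 : |z| ≤ 1 := abs_le.mpr ⟨by linarith, by linarith⟩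
    set y := 2*(k:ℝ) + (-1:ℝ)^k.natAbs * x' with hy
    have h2k : 2*|(k:ℝ)| ≤ |y| + 1 := by
      have h := abs_add_le y (-((-1:ℝ)^k.natAbs * x'))
      have h2 : y + -((-1:ℝ)^k.natAbs * x') = 2*(k:ℝ) := by rw [hy]; ring
      rw [h2, abs_neg] at h
      have h3 : |2*(k:ℝ)| = 2*|(k:ℝ)| := by
        rw [abs_mul]
        norm_num
      linarith
    have h3 : |y| - |z| ≤ |z - y| := by
      rw [abs_sub_comm]
      exact abs_sub_abs_le_abs_sub _ _
    rw [hm]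
    nlinarith [mul_nonneg (by linarith : (0:ℝ) ≤ 1 - 3*a/4) (by linarith : (0:ℝ) ≤ |(k:ℝ)|)]

lemma gamma_lip {a τ x' z₁ z₂ : ℝ} (ha0 : 0 < a) (ha1 : a < 1) (hτ : 0 < τ)
    (hx'l : -1 ≤ x') (hx'r : x' ≤ 1)
    (H : ∀ z ∈ Set.uIcc z₁ z₂,
      (-1 + 3*a/4 ≤ z ∧ z ≤ 1 - 3*a/4) ∧ 3*a/4 ≤ |z - x'|) :
    |heatGamma z₁ x' τ - heatGamma z₂ x' τ| ≤ (128/(9*a^2) * Sint) * |z₁ - z₂| := by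
  set y : ℤ → ℝ := fun k => 2*(k:ℝ) + (-1:ℝ)^k.natAbs * x' with hy
  have hdist : ∀ z ∈ Set.uIcc z₁ z₂, ∀ k : ℤ, 3*a/4 * mfun k ≤ |z - y k| := fun z hz k =>
    geom_bound ha0 ha1 hx'l hx'r (H z hz).1.1 (H z hz).1.2 (H z hz).2 k
  have hd0 : ∀ k : ℤ, 0 < 3*a/4 * mfun k := fun k => by
    have := mfun_pos k
    positivity
  have hne : ∀ z ∈ Set.uIcc z₁ z₂, ∀ k : ℤ, z - y k ≠ 0 := by
    intro z hz k h
    have h1 := hdist z hz k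
    rw [h, abs_zero] at h1
    exact absurd h1 (not_le.mpr (hd0 k))
  have hsum : ∀ z ∈ Set.uIcc z₁ z₂, Summable (fun k : ℤ => heatK (z - y k) τ) := by
    intro z hz
    refine Summable.of_nonneg_of_le (fun k => heatK_nonneg _ _) (fun k => ?_)
      (summable_inv_mfun_sq.mul_left ((Real.sqrt (4*Real.pi*τ))⁻¹ * (4*τ) / (3*a/4)^2))
    calc heatK (z - y k) τ ≤ (Real.sqrt (4*Real.pi*τ))⁻¹ * (4*τ) / (z - y k)^2 :=
            heatK_le hτ (hne z hz k)
        _ ≤ ((Real.sqrt (4*Real.pi*τ))⁻¹ * (4*τ) / (3*a/4)^2) * (1/(mfun k)^2) := by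
            rw [div_mul_div_comm, mul_one]
            apply div_le_div_of_nonneg_left (by positivity)
              (by have := mfun_pos k; positivity)
            calc (3*a/4)^2 * (mfun k)^2 = (3*a/4 * mfun k)^2 := by ring
              _ ≤ |z - y k|^2 := by
                  have h1 := hdist z hz k
                  nlinarith [(hd0 k).le]
              _ = (z - y k)^2 := sq_abs _
  have h1 := hsum z₁ Set.left_mem_uIcc
  have h2 := hsum z₂ Set.right_mem_uIcc
  have hdiff : heatGamma z₁ x' τ - heatGamma z₂ x' τ
      = ∑' k : ℤ, (heatK (z₁ - y k) τ - heatK (z₂ - y k) τ) := (Summable.tsum_sub h1 h2).symm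
  have hlip : ∀ k : ℤ, |heatK (z₁ - y k) τ - heatK (z₂ - y k) τ|
      ≤ (128/(9*a^2) * (1/(mfun k)^2)) * |z₁ - z₂| := by
    intro k
    have h := heatK_lip hτ (hd0 k) (fun z hz => hdist z hz k)
    have hconst : 8/(3*a/4 * mfun k)^2 = 128/(9*a^2) * (1/(mfun k)^2) := by
      have := (mfun_pos k).ne'
      field_simp
      ring
    rw [hconst] at h
    exact h
  have hsummaj : Summable (fun k : ℤ => (128/(9*a^2) * (1/(mfun k)^2)) * |z₁ - z₂|) :=
    (summable_inv_mfun_sq.mul_left _).mul_right _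
  have hsumabs : Summable (fun k : ℤ => |heatK (z₁ - y k) τ - heatK (z₂ - y k) τ|) :=
    Summable.of_nonneg_of_le (fun k => abs_nonneg _) hlip hsummaj
  rw [hdiff]
  calc |∑' k : ℤ, (heatK (z₁ - y k) τ - heatK (z₂ - y k) τ)|
      ≤ ∑' k : ℤ, |heatK (z₁ - y k) τ - heatK (z₂ - y k) τ| := by
        have := norm_tsum_le_tsum_norm
          (f := fun k : ℤ => heatK (z₁ - y k) τ - heatK (z₂ - y k) τ)
          (by simpa only [Real.norm_eq_abs] using hsumabs)
        simpa only [Real.norm_eq_abs] using this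
    _ ≤ ∑' k : ℤ, (128/(9*a^2) * (1/(mfun k)^2)) * |z₁ - z₂| :=
        Summable.tsum_le_tsum hlip hsumabs hsummaj
    _ = (128/(9*a^2) * Sint) * |z₁ - z₂| := by
        rw [tsum_mul_right, tsum_mul_left]
        rfl


set_option maxHeartbeats 1000000 in
/-- Estimate on the spatial derivative of the Duhamel source term `I₂`
(first part of Lemma 2.4): `|∂ₓ I₂(x,t)| ≤ G(a) ∫₀ᵗ |λ_n(s)| ds`. -/
theorem statement4 (a : ℝ) (ha : a ∈ Set.Ioo (0:ℝ) 1) :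
    ∃ G : ℝ, ∀ (abar₀ tbar pI : ℝ) (pn lamn : ℝ → ℝ),
      0 < abar₀ → abar₀ < a / 8 → pI ∈ Set.Ioo (-1:ℝ) 1 →
      (∀ t, 0 < t → t < tbar →
        |pI - pn t| < abar₀ ∧ -1 ≤ pn t - a ∧ pn t + a ≤ 1) →
      MeasureTheory.IntegrableOn lamn (Set.Ioo 0 tbar) →
      ∀ t, 0 < t → t < tbar → ∀ x, |x - pI| < abar₀ →
        |deriv (fun z => ∫ s in (0:ℝ)..t,
            (heatGamma z (pn s - a) (t - s) - heatGamma z (pn s + a) (t - s)) * lamn s) x|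
          ≤ G * ∫ s in (0:ℝ)..t, |lamn s| := by
  obtain ⟨ha0, ha1⟩ := ha
  refine ⟨2 * (128/(9*a^2) * Sint), ?_⟩
  intro abar₀ tbar pI pn lamn hb0 hb8 hpI hpn hlam t ht htb x hx
  have hLa0 : 0 ≤ 128/(9*a^2) * Sint := mul_nonneg (by positivity) Sint_nonneg
  set F : ℝ → ℝ → ℝ := fun z s =>
    (heatGamma z (pn s - a) (t - s) - heatGamma z (pn s + a) (t - s)) * lamn s with hF
  set g : ℝ → ℝ := fun z => ∫ s in (0:ℝ)..t, F z s with hg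
  set Inorm : ℝ := ∫ s in (0:ℝ)..t, |lamn s| with hIl
  have hInorm0 : 0 ≤ Inorm := by
    rw [hIl]
    exact intervalIntegral.integral_nonneg ht.le (fun s _ => abs_nonneg _)
  have hCtot0 : 0 ≤ 2 * (128/(9*a^2) * Sint) * Inorm :=
    mul_nonneg (mul_nonneg (by norm_num) hLa0) hInorm0
  show |deriv g x| ≤ 2 * (128/(9*a^2) * Sint) * Inorm
  -- geometry of the ball
  have hz4 : ∀ z ∈ Metric.ball pI abar₀, ∀ s, 0 < s → s < tbar → |z - pn s| < a/4 := by
    intro z hz s hs1 hs2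
    rw [Metric.mem_ball, Real.dist_eq] at hz
    have h1 := (hpn s hs1 hs2).1
    calc |z - pn s| ≤ |z - pI| + |pI - pn s| := abs_sub_le _ _ _
      _ < abar₀ + abar₀ := by linarith
      _ ≤ a/4 := by linarith
  have hzIcc : ∀ z ∈ Metric.ball pI abar₀, -1 + 3*a/4 ≤ z ∧ z ≤ 1 - 3*a/4 := by
    intro z hz
    have h4 := hz4 z hz t ht htb
    obtain ⟨-, h2, h3⟩ := hpn t ht htb
    rw [abs_lt] at h4
    constructor <;> [linarith; linarith]
  have hzx : ∀ z ∈ Metric.ball pI abar₀, ∀ s, 0 < s → s < tbar →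
      3*a/4 ≤ |z - (pn s - a)| ∧ 3*a/4 ≤ |z - (pn s + a)| := by
    intro z hz s hs1 hs2
    have h4 := hz4 z hz s hs1 hs2
    rw [abs_lt] at h4
    constructor
    · rw [show z - (pn s - a) = (z - pn s) + a by ring, abs_of_pos (by linarith)]
      linarith
    · rw [show z - (pn s + a) = (z - pn s) - a by ring, abs_of_neg (by linarith), neg_sub]
      linarith
  -- key pointwise estimate
  have key : ∀ z₁ ∈ Metric.ball pI abar₀, ∀ z₂ ∈ Metric.ball pI abar₀, ∀ s ∈ Set.Ioc (0:ℝ) t,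
      |F z₁ s - F z₂ s| ≤ (2 * (128/(9*a^2) * Sint) * |lamn s|) * |z₁ - z₂| := by
    intro z₁ hz₁ z₂ hz₂ s hs
    have hsub : Set.uIcc z₁ z₂ ⊆ Metric.ball pI abar₀ :=
      ((convex_ball pI abar₀).ordConnected).uIcc_subset hz₁ hz₂
    rcases eq_or_lt_of_le hs.2 with rfl | hst
    · have hzero : ∀ z, F z s = 0 := by
        intro z
        simp only [hF, sub_self, heatGamma_zero, zero_mul, sub_zero, mul_zero]
      rw [hzero z₁, hzero z₂, sub_zero, abs_zero]
      exact mul_nonneg (mul_nonneg (mul_nonneg (by norm_num) hLa0) (abs_nonneg _)) (abs_nonneg _)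
    · have hτ : 0 < t - s := by linarith
      have hstb : s < tbar := lt_trans hst htb
      obtain ⟨hp1, hp2, hp3⟩ := hpn s hs.1 hstb
      have H₁ : ∀ z ∈ Set.uIcc z₁ z₂,
          (-1 + 3*a/4 ≤ z ∧ z ≤ 1 - 3*a/4) ∧ 3*a/4 ≤ |z - (pn s - a)| := fun z hz =>
        ⟨hzIcc z (hsub hz), (hzx z (hsub hz) s hs.1 hstb).1⟩
      have H₂ : ∀ z ∈ Set.uIcc z₁ z₂,
          (-1 + 3*a/4 ≤ z ∧ z ≤ 1 - 3*a/4) ∧ 3*a/4 ≤ |z - (pn s + a)| := fun z hz =>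
        ⟨hzIcc z (hsub hz), (hzx z (hsub hz) s hs.1 hstb).2⟩
      have G₁ := gamma_lip ha0 ha1 hτ (by linarith) (by linarith) H₁
      have G₂ := gamma_lip ha0 ha1 hτ (by linarith) (by linarith) H₂
      have expand : F z₁ s - F z₂ s =
          ((heatGamma z₁ (pn s - a) (t-s) - heatGamma z₂ (pn s - a) (t-s))
            - (heatGamma z₁ (pn s + a) (t-s) - heatGamma z₂ (pn s + a) (t-s))) * lamn s := by
        simp only [hF]
        ring
      rw [expand, abs_mul]
      have habs : |(heatGamma z₁ (pn s - a) (t-s) - heatGamma z₂ (pn s - a) (t-s))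
            - (heatGamma z₁ (pn s + a) (t-s) - heatGamma z₂ (pn s + a) (t-s))|
          ≤ 2 * (128/(9*a^2) * Sint) * |z₁ - z₂| := by
        calc |(heatGamma z₁ (pn s - a) (t-s) - heatGamma z₂ (pn s - a) (t-s))
              - (heatGamma z₁ (pn s + a) (t-s) - heatGamma z₂ (pn s + a) (t-s))|
            ≤ |heatGamma z₁ (pn s - a) (t-s) - heatGamma z₂ (pn s - a) (t-s)|
              + |heatGamma z₁ (pn s + a) (t-s) - heatGamma z₂ (pn s + a) (t-s)| := by
              rw [sub_eq_add_neg]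
              refine (abs_add_le _ _).trans ?_
              rw [abs_neg]
          _ ≤ 2 * (128/(9*a^2) * Sint) * |z₁ - z₂| := by linarith
      calc |(heatGamma z₁ (pn s - a) (t-s) - heatGamma z₂ (pn s - a) (t-s))
            - (heatGamma z₁ (pn s + a) (t-s) - heatGamma z₂ (pn s + a) (t-s))| * |lamn s|
          ≤ (2 * (128/(9*a^2) * Sint) * |z₁ - z₂|) * |lamn s| :=
            mul_le_mul_of_nonneg_right habs (abs_nonneg _)
        _ = (2 * (128/(9*a^2) * Sint) * |lamn s|) * |z₁ - z₂| := by ring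
  -- integrability of |lamn|
  have hsubset : Set.Ioc (0:ℝ) t ⊆ Set.Ioo 0 tbar := fun s hs => ⟨hs.1, lt_of_le_of_lt hs.2 htb⟩
  have hlamabs : IntervalIntegrable (fun s => |lamn s|) volume 0 t := by
    rw [intervalIntegrable_iff, Set.uIoc_of_le ht.le]
    exact (hlam.mono_set hsubset).abs
  -- Lipschitz bound at integrable points
  have hgood : ∀ z₁ ∈ Metric.ball pI abar₀, ∀ z₂ ∈ Metric.ball pI abar₀,
      IntervalIntegrable (F z₁) volume 0 t → IntervalIntegrable (F z₂) volume 0 t →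
      |g z₁ - g z₂| ≤ (2 * (128/(9*a^2) * Sint) * Inorm) * |z₁ - z₂| := by
    intro z₁ hz₁ z₂ hz₂ hi₁ hi₂
    have hgd : g z₁ - g z₂ = ∫ s in (0:ℝ)..t, (F z₁ s - F z₂ s) :=
      (intervalIntegral.integral_sub hi₁ hi₂).symm
    have hb : IntervalIntegrable
        (fun s => (2*(128/(9*a^2)*Sint)*|z₁ - z₂|) * |lamn s|) volume 0 t :=
      hlamabs.const_mul _
    have hae : ∀ᵐ s ∂(volume.restrict (Set.uIoc 0 t)),
        ‖F z₁ s - F z₂ s‖ ≤ (2*(128/(9*a^2)*Sint)*|z₁ - z₂|) * |lamn s| := by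
      rw [Set.uIoc_of_le ht.le]
      refine (ae_restrict_iff' measurableSet_Ioc).mpr (Filter.Eventually.of_forall ?_)
      intro s hs
      rw [Real.norm_eq_abs]
      calc |F z₁ s - F z₂ s| ≤ (2*(128/(9*a^2)*Sint)*|lamn s|)*|z₁ - z₂| :=
            key z₁ hz₁ z₂ hz₂ s hs
        _ = (2*(128/(9*a^2)*Sint)*|z₁ - z₂|) * |lamn s| := by ring
    have hni := intervalIntegral.norm_integral_le_abs_of_norm_le hae hb
    rw [Real.norm_eq_abs] at hni
    rw [hgd]
    calc |∫ s in (0:ℝ)..t, (F z₁ s - F z₂ s)|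
        ≤ abs (∫ s in (0:ℝ)..t, (2*(128/(9*a^2)*Sint)*|z₁ - z₂|) * |lamn s|) := hni
      _ = (2*(128/(9*a^2)*Sint)*|z₁ - z₂|) * Inorm := by
          rw [intervalIntegral.integral_const_mul, ← hIl]
          exact abs_of_nonneg (mul_nonneg
            (mul_nonneg (mul_nonneg (by norm_num) hLa0) (abs_nonneg _)) hInorm0)
      _ = (2 * (128/(9*a^2) * Sint) * Inorm) * |z₁ - z₂| := by ring
  by_cases hdiff : DifferentiableAt ℝ g x
  · have hd : HasDerivAt g (deriv g x) x := hdiff.hasDerivAt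
    have hslope := hasDerivAt_iff_tendsto_slope.mp hd
    have hgap : 0 < abar₀ - |x - pI| := by linarith
    by_cases hA : ∃ ε : ℝ, 0 < ε ∧ ε ≤ abar₀ - |x - pI| ∧
        ∀ z, |z - x| < ε → z ≠ x → IntervalIntegrable (F z) volume 0 t
    · obtain ⟨ε, hε0, hεle, hgz⟩ := hA
      have hzball : ∀ z, |z - x| < ε → z ∈ Metric.ball pI abar₀ := by
        intro z hz
        rw [Metric.mem_ball, Real.dist_eq]
        calc |z - pI| ≤ |z - x| + |x - pI| := abs_sub_le _ _ _
          _ < ε + |x - pI| := by linarith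
          _ ≤ abar₀ := by linarith
      have hxball : x ∈ Metric.ball pI abar₀ := by
        rw [Metric.mem_ball, Real.dist_eq]; exact hx
      have hbound : ∀ z, z ≠ x → |z - x| < ε →
          |g z - g x| ≤ (2 * (128/(9*a^2) * Sint) * Inorm) * |z - x| := by
        intro z hzne hzε
        by_cases hPx : IntervalIntegrable (F x) volume 0 t
        · exact hgood z (hzball z hzε) x hxball (hgz z hzε hzne) hPx
        · have hgx0 : g x = 0 := intervalIntegral.integral_undef hPx
          rw [hgx0, sub_zero]
          set w : ℕ → ℝ := fun j => x + ε/(2*((j:ℝ)+1)) with hw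
          have hwne : ∀ j : ℕ, w j ≠ x := by
            intro j
            simp only [hw]
            have hpos : (0:ℝ) < ε/(2*((j:ℝ)+1)) := by positivity
            intro hcon
            have : ε/(2*((j:ℝ)+1)) = 0 := by linarith [congrArg (fun u => u - x) hcon]
            linarith
          have hwlt : ∀ j : ℕ, |w j - x| < ε := by
            intro j
            simp only [hw, add_sub_cancel_left]
            rw [abs_of_pos (by positivity), div_lt_iff₀ (by positivity)]
            nlinarith [hε0, (Nat.cast_nonneg j : (0:ℝ) ≤ (j:ℝ))]
          have hbj : ∀ j, |g z - g (w j)| ≤ (2 * (128/(9*a^2) * Sint) * Inorm) * |z - w j| :=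
            fun j => hgood z (hzball z hzε) (w j) (hzball _ (hwlt j))
              (hgz z hzε hzne) (hgz _ (hwlt j) (hwne j))
          have hwlim : Filter.Tendsto w Filter.atTop (nhds x) := by
            have h0 : Filter.Tendsto (fun j : ℕ => ε/(2*((j:ℝ)+1)))
                Filter.atTop (nhds 0) := by
              have h1 := tendsto_one_div_add_atTop_nhds_zero_nat.const_mul (ε/2)
              rw [mul_zero] at h1
              refine h1.congr (fun j => ?_)
              field_simp
            have := h0.const_add x
            rw [add_zero] at this
            exact this
          have hglim : Filter.Tendsto (fun j => g (w j)) Filter.atTop (nhds 0) := by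
            have := (hd.continuousAt.tendsto).comp hwlim
            rw [hgx0] at this
            exact this
          have h1 : Filter.Tendsto (fun j => |g z - g (w j)|) Filter.atTop (nhds |g z - 0|) :=
            (tendsto_const_nhds.sub hglim).abs
          have h2 : Filter.Tendsto (fun j => (2 * (128/(9*a^2) * Sint) * Inorm) * |z - w j|)
              Filter.atTop (nhds ((2 * (128/(9*a^2) * Sint) * Inorm) * |z - x|)) :=
            ((tendsto_const_nhds.sub hwlim).abs).const_mul _
          have := le_of_tendsto_of_tendsto' h1 h2 hbj
          simpa using this
      have hev : ∀ᶠ z in nhdsWithin x {x}ᶜ,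
          |slope g x z| ≤ 2 * (128/(9*a^2) * Sint) * Inorm := by
        have hball : Metric.ball x ε ∈ nhds x := Metric.ball_mem_nhds x hε0
        filter_upwards [mem_nhdsWithin_of_mem_nhds hball, self_mem_nhdsWithin] with z hz1 hz2
        rw [Metric.mem_ball, Real.dist_eq] at hz1
        have hzne : z ≠ x := hz2
        have hzx0 : z - x ≠ 0 := sub_ne_zero.mpr hzne
        rw [slope_def_field, abs_div, div_le_iff₀ (abs_pos.mpr hzx0)]
        exact hbound z hzne hz1
      exact le_of_tendsto hslope.abs hev
    · push_neg at hA
      have hfreq : ∃ᶠ z in nhdsWithin x {x}ᶜ, ¬ IntervalIntegrable (F z) volume 0 t := by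
        rw [Filter.frequently_iff]
        intro U hU
        rw [Metric.mem_nhdsWithin_iff] at hU
        obtain ⟨ε, hε0, hεsub⟩ := hU
        obtain ⟨z, hz1, hz2, hz3⟩ := hA (min ε (abar₀ - |x - pI|))
          (lt_min hε0 hgap) (min_le_right _ _)
        refine ⟨z, hεsub ⟨?_, hz2⟩, hz3⟩
        rw [Metric.mem_ball, Real.dist_eq]
        exact lt_of_lt_of_le hz1 (min_le_left _ _)
      have hgx0 : g x = 0 := by
        have hfz : ∃ᶠ z in nhdsWithin x {x}ᶜ, g z ∈ ({0} : Set ℝ) :=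
          hfreq.mono (fun z hz => by
            simp only [Set.mem_singleton_iff]
            exact intervalIntegral.integral_undef hz)
        have hcl := mem_closure_of_frequently_of_tendsto hfz
          (hd.continuousAt.tendsto.mono_left nhdsWithin_le_nhds)
        simpa using hcl
      have hfs : ∃ᶠ z in nhdsWithin x {x}ᶜ, slope g x z ∈ ({0} : Set ℝ) :=
        hfreq.mono (fun z hz => by
          have hz0 : g z = 0 := intervalIntegral.integral_undef hz
          simp only [Set.mem_singleton_iff, slope_def_field, hz0, hgx0]
          simp)
      have hcl := mem_closure_of_frequently_of_tendsto hfs hslope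
      have hder0 : deriv g x = 0 := by simpa using hcl
      rw [hder0, abs_zero]
      exact hCtot0
  · rw [deriv_zero_of_not_differentiableAt hdiff, abs_zero]
    exact hCtot0
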